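/- Let β ∈ ℝ and define Ψ_β : ℝ → ℝ by Ψ_β(x) = (1/π)·sin(π·(0.3·sin(πx) + x)) + 0.3·sin(πx) + x + β. Then Ψ_β is strictly monotone increasing on ℝ; in particular it has no local maxima or minima. -/

import Mathlib

open Real

lemma abs_sin_lt_self {t : ℝ} (ht : 0 < t) : |Real.sin t| < t := by
  rw [abs_lt]
  refine ⟨?_, Real.sin_lt ht⟩
  rcases lt_or_ge t π with h | h
  · have := Real.sin_pos_of_pos_of_lt_pi ht h
    linarith
  · have h1 : (-1 : ℝ) ≤ Real.sin t := Real.neg_one_le_sin t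
    have := Real.pi_gt_three
    linarith

lemma abs_sin_sub_sin_lt {a b : ℝ} (hab : a < b) :
    |Real.sin b - Real.sin a| < b - a := by
  have h := Real.sin_sub_sin b a
  have ht : 0 < (b - a) / 2 := by linarith
  have h1 : |Real.sin ((b - a) / 2)| < (b - a) / 2 := abs_sin_lt_self ht
  have h2 : |Real.cos ((b + a) / 2)| ≤ 1 := Real.abs_cos_le_one _
  calc |Real.sin b - Real.sin a|
      = |2 * Real.sin ((b - a) / 2) * Real.cos ((b + a) / 2)| := by rw [h]
    _ = 2 * |Real.sin ((b - a) / 2)| * |Real.cos ((b + a) / 2)| := by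
        rw [abs_mul, abs_mul, abs_two]
    _ ≤ 2 * |Real.sin ((b - a) / 2)| := by
        nlinarith [abs_nonneg (Real.sin ((b - a) / 2))]
    _ < b - a := by linarith

/-- The family `Ψ_β(x) = (1/π) sin (π (0.3 sin (π x) + x)) + 0.3 sin (π x) + x + β`
is strictly monotone increasing on `ℝ`. -/
theorem stmt_5 (β : ℝ) (Ψ : ℝ → ℝ)
    (hΨ : ∀ x : ℝ, Ψ x =
      (1 / π) * Real.sin (π * (0.3 * Real.sin (π * x) + x)) +
        0.3 * Real.sin (π * x) + x + β) :
    StrictMono Ψ := by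
  intro a b hab
  rw [hΨ a, hΨ b]
  have hπ : 0 < π := Real.pi_pos
  have hπ315 : π < 3.15 := by
    have := Real.pi_lt_d2
    linarith
  -- inner function values
  set ga : ℝ := 0.3 * Real.sin (π * a) + a with hga
  set gb : ℝ := 0.3 * Real.sin (π * b) + b with hgb
  have hlt : π * a < π * b := by nlinarith
  have h1 : |Real.sin (π * b) - Real.sin (π * a)| < π * b - π * a :=
    abs_sin_sub_sin_lt hlt
  have h1' := abs_lt.mp h1
  have hg : ga < gb := by
    rw [hga, hgb]
    nlinarith [h1'.1]
  have hlt2 : π * ga < π * gb := by nlinarith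
  have h2 := (abs_lt.mp (abs_sin_sub_sin_lt hlt2)).1
  -- multiply by 1/π > 0
  have hπ' : 0 < 1 / π := by positivity
  have h3 : (1 / π) * (-(π * gb - π * ga)) < (1 / π) * (Real.sin (π * gb) - Real.sin (π * ga)) :=
    mul_lt_mul_of_pos_left h2 hπ'
  have h4 : (1 / π) * (-(π * gb - π * ga)) = -(gb - ga) := by
    field_simp
  rw [h4, mul_sub] at h3
  have hgg : gb - ga = 0.3 * Real.sin (π * b) + b - (0.3 * Real.sin (π * a) + a) := by
    rw [hga, hgb]
  rw [hgg] at h3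
  linarith
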